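/- Let A_{t_1}, …, A_{t_n} be square real matrices and α, β real with times t_1 < t_2 < ⋯ < t_n. Define W_{t_n} = A_{t_n} + ∑_{r=1}^{n-1} e^{-β(t_n − t_{n-r})} ∑_{m_{n-r+1},…,m_n ∈ {0,1}} α^{∑ m_i} A_{t_{n-r}} A_{t_{n-r+1}}^{m_{n-r+1}} ⋯ A_{t_n}^{m_n}. Then W satisfies the recursion W_{t_n} = A_{t_n} + e^{-β(t_n − t_{n-1})} W_{t_{n-1}} (I + α A_{t_n}) for n > 1, with W_{t_1} = A_{t_1}. -/

import Mathlib

set_option maxRecDepth 10000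

open Finset in
lemma keyProd {N : ℕ} (α : ℝ) :
    ∀ (r : ℕ) (f : ℕ → Matrix (Fin N) (Fin N) ℝ),
      (∑ m : Fin r → Bool,
        (α ^ (Finset.univ.filter (fun i => m i = true)).card) •
          (List.ofFn (fun i : Fin r => f i ^ (if m i then 1 else 0))).prod)
      = (List.ofFn (fun i : Fin r => (1 : Matrix (Fin N) (Fin N) ℝ) + α • f i)).prod := by
  intro r
  induction r with
  | zero => intro f; simp
  | succ r ih =>
    intro f
    rw [← Equiv.sum_comp (Fin.consEquiv (fun _ : Fin (r+1) => Bool))]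
    rw [Fintype.sum_prod_type]
    have hc : ∀ (b : Bool) (m : Fin r → Bool),
        (Finset.univ.filter (fun i => Fin.cons (α := fun _ => Bool) b m i = true)).card
          = (if b then 1 else 0) + (Finset.univ.filter (fun i => m i = true)).card := by
      intro b m
      rw [Finset.card_filter, Finset.card_filter, Fin.sum_univ_succ]
      simp
    have hl : ∀ (b : Bool) (m : Fin r → Bool),
        (List.ofFn (fun i : Fin (r+1) => f i ^ (if Fin.cons (α := fun _ => Bool) b m i then 1 else 0))).prod
          = f 0 ^ (if b then 1 else 0) *
            (List.ofFn (fun i : Fin r => f (i+1) ^ (if m i then 1 else 0))).prod := by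
      intro b m
      rw [List.ofFn_succ]
      simp [Fin.cons_succ]
    have step : ∀ (b : Bool) (m : Fin r → Bool),
        (α ^ (Finset.univ.filter
            (fun i => (Fin.consEquiv (fun _ : Fin (r+1) => Bool)) (b, m) i = true)).card) •
          (List.ofFn (fun i : Fin (r+1) =>
            f i ^ (if (Fin.consEquiv (fun _ : Fin (r+1) => Bool)) (b, m) i then 1 else 0))).prod
        = ((α ^ (if b then 1 else 0)) • f 0 ^ (if b then 1 else 0)) *
            ((α ^ (Finset.univ.filter (fun i => m i = true)).card) •
              (List.ofFn (fun i : Fin r => f (i+1) ^ (if m i then 1 else 0))).prod) := by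
      intro b m
      rw [smul_mul_assoc, mul_smul_comm, smul_smul, ← pow_add]
      simp only [Fin.consEquiv_apply]
      rw [hc, hl]
    simp only [step]
    simp only [← Finset.mul_sum]
    rw [ih (fun k => f (k+1)), Fintype.sum_bool, List.ofFn_succ]
    simp only [List.prod_cons, if_true, if_false, pow_one, pow_zero, one_smul, one_mul,
      Fin.val_succ]
    norm_num [add_comm]
    rw [add_mul, one_mul, smul_mul_assoc, add_comm]

lemma S_closed {N : ℕ} (A : ℕ → Matrix (Fin N) (Fin N) ℝ) (α : ℝ) (n r : ℕ) :
    (∑ m : Fin r → Bool,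
      (α ^ (Finset.univ.filter (fun i => m i = true)).card) •
        (A (n - r) *
          (List.ofFn (fun i : Fin r =>
            A (n - r + 1 + (i : ℕ)) ^ (if m i then 1 else 0))).prod))
    = A (n - r) * (List.ofFn (fun i : Fin r =>
        (1 : Matrix (Fin N) (Fin N) ℝ) + α • A (n - r + 1 + (i : ℕ)))).prod := by
  rw [← keyProd α r (fun j => A (n - r + 1 + j)), Finset.mul_sum]
  exact Finset.sum_congr rfl fun m _ => (mul_smul_comm _ _ _).symm

/-- The explicit dynamic win-score matrix: direct wins at time `t n` plus, for
each earlier time `t (n-r)`, exponentially discounted (in-)direct win paths. -/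
noncomputable def dynWinMatrix {N : ℕ} (A : ℕ → Matrix (Fin N) (Fin N) ℝ)
    (t : ℕ → ℝ) (α β : ℝ) (n : ℕ) : Matrix (Fin N) (Fin N) ℝ :=
  A n + ∑ r ∈ Finset.Icc 1 n, Real.exp (-β * (t n - t (n - r))) •
    ∑ m : Fin r → Bool,
      (α ^ (Finset.univ.filter (fun i => m i = true)).card) •
        (A (n - r) *
          (List.ofFn (fun i : Fin r =>
            A (n - r + 1 + (i : ℕ)) ^ (if m i then 1 else 0))).prod)

/-- The explicitly defined dynamic win-score matrix satisfies the recursion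
`W_{t_1} = A_{t_1}` and
`W_{t_n} = A_{t_n} + e^{-β(t_n - t_{n-1})} W_{t_{n-1}} (I + α A_{t_n})`. -/
theorem dynWinMatrix_recursion {N : ℕ} (A : ℕ → Matrix (Fin N) (Fin N) ℝ)
    (t : ℕ → ℝ) (ht : StrictMono t) (α β : ℝ) :
    dynWinMatrix A t α β 0 = A 0 ∧
    ∀ n : ℕ, 0 < n →
      dynWinMatrix A t α β n =
        A n + Real.exp (-β * (t n - t (n - 1))) •
          (dynWinMatrix A t α β (n - 1) * (1 + α • A n)) := by
  constructor
  · simp [dynWinMatrix]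
  · intro n hn
    obtain ⟨k, rfl⟩ : ∃ k, n = k + 1 := ⟨n - 1, (Nat.succ_pred_eq_of_pos hn).symm⟩
    simp only [dynWinMatrix, S_closed, Nat.add_sub_cancel]
    congr 1
    rw [show Finset.Icc 1 (k+1) = Finset.Ico 1 (k+1+1) from (Finset.Ico_add_one_right_eq_Icc ..).symm,
        Finset.sum_Ico_eq_sum_range, Nat.add_sub_cancel, Finset.sum_range_succ',
        show Finset.Icc 1 k = Finset.Ico 1 (k+1) from (Finset.Ico_add_one_right_eq_Icc ..).symm,
        Finset.sum_Ico_eq_sum_range, Nat.add_sub_cancel]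
    have hB : (List.ofFn fun i : Fin 1 => (1:Matrix (Fin N) (Fin N) ℝ) + α • A (k+1+(i:ℕ))).prod
        = 1 + α • A (k+1) := by simp
    rw [add_mul, Finset.sum_mul, smul_add, Finset.smul_sum, hB, add_comm]
    congr 1
    refine Finset.sum_congr rfl fun j hj => ?_
    have hjk : j < k := Finset.mem_range.mp hj
    have h1 : k + 1 - (1 + (j+1)) = k - (1 + j) := by omega
    have h2 : k - (1+j) + 1 + (1+j) = k + 1 := by omega
    rw [h1, smul_mul_assoc, smul_smul, ← Real.exp_add,
      show -β * (t (k+1) - t k) + -β * (t k - t (k - (1+j))) = -β * (t (k+1) - t (k - (1+j))) by ring]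
    congr 1
    rw [mul_assoc]
    congr 1
    rw [List.ofFn_succ', List.prod_concat]
    simp only [Fin.val_last, Fin.coe_castSucc]
    rw [show k - (1+j) + 1 + Nat.add 1 j = k + 1 by simp only [Nat.add_eq]; omega]
    rfl
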